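/- Let (A,B) be a nonempty, bounded, closed and convex pair in a convex metric space (X,d,W) with property (C), and suppose T : A ∪ B → A ∪ B is a cyclic contraction. Then T has a best proximity point, i.e., there exists u ∈ A ∪ B with d(u,Tu) = dist(A,B). -/
import Mathlib


/-- `dist(A,B) = inf{d(a,b) : a ∈ A, b ∈ B}`. -/
noncomputable def setDist {X : Type*} [MetricSpace X] (A B : Set X) : ℝ :=
  sInf {r | ∃ a ∈ A, ∃ b ∈ B, r = dist a b}

/-- `K` is convex with respect to the convex structure `W`. -/
def WConvex {X : Type*} (W : X → X → ℝ → X) (K : Set X) : Prop :=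
  ∀ u ∈ K, ∀ v ∈ K, ∀ l ∈ Set.Icc (0:ℝ) 1, W u v l ∈ K

/-- A convex metric space has property (C) if every bounded decreasing net of nonempty
closed subsets has nonempty intersection. -/
def PropertyC (X : Type*) [MetricSpace X] : Prop :=
  ∀ (ι : Type) [Nonempty ι] [Preorder ι] [IsDirected ι (· ≤ ·)] (F : ι → Set X),
    (∀ i, (F i).Nonempty) → (∀ i, IsClosed (F i)) → (∀ i, Bornology.IsBounded (F i)) →
    (∀ i j, i ≤ j → F j ⊆ F i) → (⋂ i, F i).Nonempty

/-- A cyclic contraction on a nonempty bounded closed convex pair in a convex metric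
space with property (C) has a best proximity point. -/
theorem cyclic_contraction_best_proximity {X : Type*} [MetricSpace X]
    (W : X → X → ℝ → X)
    (hW : ∀ u v z : X, ∀ l ∈ Set.Icc (0:ℝ) 1,
      dist z (W u v l) ≤ l * dist z u + (1 - l) * dist z v)
    (hC : PropertyC X)
    (A B : Set X) (hA : A.Nonempty) (hB : B.Nonempty)
    (hAb : Bornology.IsBounded A) (hBb : Bornology.IsBounded B)
    (hAc : IsClosed A) (hBc : IsClosed B)
    (hAconv : WConvex W A) (hBconv : WConvex W B)
    (T : X → X) (hTA : ∀ a ∈ A, T a ∈ B) (hTB : ∀ b ∈ B, T b ∈ A)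
    (k : ℝ) (hk0 : 0 < k) (hk1 : k < 1)
    (hcontr : ∀ u ∈ A, ∀ v ∈ B,
      dist (T u) (T v) ≤ k * dist u v + (1 - k) * setDist A B) :
    ∃ u ∈ A ∪ B, dist u (T u) = setDist A B := by
  classical
  set δ := setDist A B with hδdef
  obtain ⟨a0, ha0⟩ := hA
  obtain ⟨b0, hb0⟩ := hB
  have hSne : {r | ∃ a ∈ A, ∃ b ∈ B, r = dist a b}.Nonempty :=
    ⟨dist a0 b0, a0, ha0, b0, hb0, rfl⟩
  have hSbdd : BddBelow {r | ∃ a ∈ A, ∃ b ∈ B, r = dist a b} := by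
    refine ⟨0, ?_⟩
    rintro r ⟨a, -, b, -, rfl⟩
    exact dist_nonneg
  have hδle : ∀ a ∈ A, ∀ b ∈ B, δ ≤ dist a b := fun a ha b hb =>
    csInf_le hSbdd ⟨a, ha, b, hb, rfl⟩
  have hδ0 : 0 ≤ δ := le_csInf hSne (by rintro r ⟨a, -, b, -, rfl⟩; exact dist_nonneg)
  -- a uniform bound
  obtain ⟨C, hCb⟩ := Metric.isBounded_iff.1 (hAb.union hBb)
  set M : ℝ := max C 0 with hMdef
  have hM0 : 0 ≤ M := le_max_right _ _
  have hMb : ∀ a ∈ A, ∀ b ∈ B, dist a b ≤ M := fun a ha b hb =>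
    le_trans (hCb (Set.mem_union_left _ ha) (Set.mem_union_right _ hb)) (le_max_left _ _)
  -- the iterated pair of sets
  set P : ℕ → Set X × Set X := fun n =>
    Nat.rec (A, B) (fun _ p => (closure (T '' p.2), closure (T '' p.1))) n with hPdef
  have hP0 : P 0 = (A, B) := rfl
  have hPs : ∀ n, P (n + 1) = (closure (T '' (P n).2), closure (T '' (P n).1)) := fun n => rfl
  -- basic properties by induction
  have hsub : ∀ n, (P n).1 ⊆ A ∧ (P n).2 ⊆ B := by
    intro n
    induction n with
    | zero => exact ⟨le_refl A, le_refl B⟩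
    | succ n ih =>
      rw [hPs n]
      constructor
      · exact closure_minimal (by rintro x ⟨y, hy, rfl⟩; exact hTB y (ih.2 hy)) hAc
      · exact closure_minimal (by rintro x ⟨y, hy, rfl⟩; exact hTA y (ih.1 hy)) hBc
  have hne : ∀ n, (P n).1.Nonempty ∧ (P n).2.Nonempty := by
    intro n
    induction n with
    | zero => exact ⟨⟨a0, ha0⟩, ⟨b0, hb0⟩⟩
    | succ n ih =>
      rw [hPs n]
      exact ⟨⟨T ih.2.choose, subset_closure ⟨ih.2.choose, ih.2.choose_spec, rfl⟩⟩,
        ⟨T ih.1.choose, subset_closure ⟨ih.1.choose, ih.1.choose_spec, rfl⟩⟩⟩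
  have hmono : ∀ n, (P (n + 1)).1 ⊆ (P n).1 ∧ (P (n + 1)).2 ⊆ (P n).2 := by
    intro n
    induction n with
    | zero =>
      rw [hPs 0, hP0]
      constructor
      · exact closure_minimal (by rintro x ⟨y, hy, rfl⟩; exact hTB y hy) hAc
      · exact closure_minimal (by rintro x ⟨y, hy, rfl⟩; exact hTA y hy) hBc
    | succ n ih =>
      rw [hPs (n + 1), hPs n]
      exact ⟨closure_mono (Set.image_mono ih.2), closure_mono (Set.image_mono ih.1)⟩
  have hanti1 : ∀ i j, i ≤ j → (P j).1 ⊆ (P i).1 := by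
    intro i j hij
    induction j with
    | zero => simp_all
    | succ j ih =>
      rcases Nat.lt_or_ge i (j + 1) with h | h
      · exact le_trans (hmono j).1 (ih (Nat.lt_succ_iff.1 h))
      · have : i = j + 1 := le_antisymm hij h
        subst this; exact le_refl _
  -- the key distance estimate
  have hkey : ∀ n, ∀ x ∈ (P n).1, ∀ y ∈ (P n).2, dist x y ≤ δ + k ^ n * M := by
    intro n
    induction n with
    | zero =>
      intro x hx y hy
      rw [hP0] at hx hy
      have := hMb x hx y hy
      simpa using le_trans this (by linarith)
    | succ n ih =>
      -- first for images, then extend to closures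
      have him : ∀ x ∈ T '' (P n).2, ∀ y ∈ T '' (P n).1, dist x y ≤ δ + k ^ (n + 1) * M := by
        rintro x ⟨v, hv, rfl⟩ y ⟨u, hu, rfl⟩
        have hu' : u ∈ A := (hsub n).1 hu
        have hv' : v ∈ B := (hsub n).2 hv
        have h1 : dist (T u) (T v) ≤ k * dist u v + (1 - k) * δ := hcontr u hu' v hv'
        have h2 : dist u v ≤ δ + k ^ n * M := ih u hu v hv
        have : dist (T v) (T u) = dist (T u) (T v) := dist_comm _ _
        rw [this]
        calc dist (T u) (T v) ≤ k * dist u v + (1 - k) * δ := h1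
          _ ≤ k * (δ + k ^ n * M) + (1 - k) * δ := by nlinarith
          _ = δ + k ^ (n + 1) * M := by ring
      -- extend in the second variable over the closure
      have him2 : ∀ x ∈ T '' (P n).2, ∀ y ∈ closure (T '' (P n).1),
          dist x y ≤ δ + k ^ (n + 1) * M := by
        intro x hx y hy
        have hcl : IsClosed {z : X | dist x z ≤ δ + k ^ (n + 1) * M} :=
          isClosed_le (continuous_dist.comp (continuous_const.prodMk continuous_id)) continuous_const
        exact closure_minimal (fun z hz => him x hx z hz) hcl hy
      intro x hx y hy
      rw [hPs n] at hx hy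
      have hcl : IsClosed {z : X | dist z y ≤ δ + k ^ (n + 1) * M} :=
        isClosed_le (continuous_dist.comp (continuous_id.prodMk continuous_const)) continuous_const
      exact closure_minimal (fun z hz => him2 z hz y hy) hcl hx
  -- property (C) gives a point in the intersection
  have hcap : (⋂ n, (P n).1).Nonempty := by
    refine hC ℕ (fun n => (P n).1) (fun n => (hne n).1) ?_ (fun n => hAb.subset (hsub n).1) hanti1
    intro n
    cases n with
    | zero => exact hAc
    | succ n => show IsClosed (P (n + 1)).1; rw [hPs n]; exact isClosed_closure
  obtain ⟨u, hu⟩ := hcap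
  have humem : ∀ n, u ∈ (P n).1 := fun n => Set.mem_iInter.1 hu n
  have huA : u ∈ A := by have := humem 0; rwa [hP0] at this
  refine ⟨u, Set.mem_union_left _ huA, ?_⟩
  have hTu : ∀ n, T u ∈ (P (n + 1)).2 := by
    intro n
    rw [hPs n]
    exact subset_closure ⟨u, humem n, rfl⟩
  have hle : ∀ n : ℕ, dist u (T u) ≤ δ + k ^ (n + 1) * M :=
    fun n => hkey (n + 1) u (humem (n + 1)) (T u) (hTu n)
  have htend : Filter.Tendsto (fun n : ℕ => δ + k ^ (n + 1) * M) Filter.atTop (nhds δ) := by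
    have h1 : Filter.Tendsto (fun n : ℕ => k ^ (n + 1)) Filter.atTop (nhds 0) := by
      have := tendsto_pow_atTop_nhds_zero_of_lt_one (le_of_lt hk0) hk1
      exact this.comp (Filter.tendsto_add_atTop_nat 1)
    have h2 : Filter.Tendsto (fun n : ℕ => δ + k ^ (n + 1) * M) Filter.atTop (nhds (δ + 0 * M)) :=
      Filter.Tendsto.add tendsto_const_nhds (h1.mul tendsto_const_nhds)
    simpa using h2
  have hub : dist u (T u) ≤ δ := ge_of_tendsto' htend hle
  have hlb : δ ≤ dist u (T u) := hδle u huA (T u) (hTA u huA)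
  exact le_antisymm hub hlb
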